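/- Let F be a constant real skew-symmetric n×n matrix, S₋ a constant real symmetric n×n matrix, and b ∈ ℝ. Then S(t) = (t+b)⁻²·exp(log(t+b)·F)·S₋·exp(-log(t+b)·F), defined for t > -b, solves the singular matrix ODE (t+b)·S'(t) + [S(t), F] + 2·S(t) = 0. -/

import Mathlib

open Matrix

attribute [local instance] Matrix.linftyOpNormedAddCommGroup Matrix.linftyOpNormedSpace
  Matrix.linftyOpNormedRing Matrix.linftyOpNormedAlgebra

/-- Auxiliary: the `(i, j)` matrix entry as a continuous linear map. -/
noncomputable def entryCLM {n : ℕ} (i j : Fin n) : Matrix (Fin n) (Fin n) ℝ →L[ℝ] ℝ :=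
  LinearMap.toContinuousLinearMap
    { toFun := fun M => M i j
      map_add' := fun _ _ => rfl
      map_smul' := fun _ _ => rfl }

/-- For a constant skew-symmetric `F`, symmetric `Sm` and `b ∈ ℝ`, the family
`S(t) = (t+b)⁻² · exp(log(t+b)·F) · Sm · exp(-log(t+b)·F)`, defined for
`t > -b`, solves the singular ODE `(t+b)·S' + [S,F] + 2S = 0`. -/
theorem homogeneous_plane_wave_family_two {n : ℕ}
    (F Sm : Matrix (Fin n) (Fin n) ℝ) (b : ℝ)
    (hF : Fᵀ = -F) (hS : Smᵀ = Sm)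
    (S : ℝ → Matrix (Fin n) (Fin n) ℝ)
    (hSdef : ∀ t, t > -b → S t =
      ((t + b) ^ 2)⁻¹ •
        (NormedSpace.exp (Real.log (t + b) • F) * Sm *
          NormedSpace.exp (-(Real.log (t + b) • F)))) :
    ∀ t, t > -b →
      ∀ i j, HasDerivAt (fun s => S s i j)
        (((t + b)⁻¹ • (-(S t * F - F * S t) - (2 : ℝ) • S t)) i j) t := by
  intro t ht i j
  have hu : (0:ℝ) < t + b := by linarith
  have hne : (t + b) ≠ 0 := ne_of_gt hu
  set L : ℝ := Real.log (t + b) with hL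
  set E1 : Matrix (Fin n) (Fin n) ℝ := NormedSpace.exp (L • F) with hE1def
  set E2 : Matrix (Fin n) (Fin n) ℝ := NormedSpace.exp (-(L • F)) with hE2def
  have hlog : HasDerivAt (fun s : ℝ => Real.log (s + b)) (t + b)⁻¹ t := by
    simpa [Function.comp_def] using (Real.hasDerivAt_log hne).comp t ((hasDerivAt_id t).add_const b)
  have hE1 : HasDerivAt (fun s : ℝ => NormedSpace.exp (Real.log (s + b) • F))
      ((t + b)⁻¹ • (E1 * F)) t := by
    have h := (hasDerivAt_exp_smul_const F L).scomp t hlog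
    simp only [Function.comp_def] at h
    exact h
  have hE2 : HasDerivAt (fun s : ℝ => NormedSpace.exp (-(Real.log (s + b) • F)))
      (-((t + b)⁻¹ • (E2 * F))) t := by
    have h := (hasDerivAt_exp_smul_const F (-L)).scomp t hlog.neg
    simp [Function.comp_def, neg_smul] at h
    exact h
  have hM : HasDerivAt
      (fun s : ℝ => NormedSpace.exp (Real.log (s + b) • F) * Sm *
        NormedSpace.exp (-(Real.log (s + b) • F)))
      (((t + b)⁻¹ • (E1 * F)) * Sm * E2 + (E1 * Sm) * -((t + b)⁻¹ • (E2 * F))) t :=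
    (hE1.mul_const Sm).mul hE2
  have hc : HasDerivAt (fun s : ℝ => (((s + b) ^ 2)⁻¹ : ℝ))
      (-(2 * (t + b)) / ((t + b) ^ 2) ^ 2) t := by
    have h := (((hasDerivAt_id t).add_const b).pow 2).inv (by simp [hne])
    simpa [Pi.pow_def, Pi.inv_def] using h
  have hfull := hc.smul hM
  have hEq : S =ᶠ[nhds t] fun s : ℝ => ((s + b) ^ 2)⁻¹ •
      (NormedSpace.exp (Real.log (s + b) • F) * Sm *
        NormedSpace.exp (-(Real.log (s + b) • F))) := by
    filter_upwards [lt_mem_nhds ht] with s hs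
    exact hSdef s hs
  have hSder := hfull.congr_of_eventuallyEq hEq
  rw [← hL, ← hE1def, ← hE2def] at hSder
  have hcomm : E1 * F = F * E1 := by
    have : Commute (L • F) F := (Commute.refl F).smul_left L
    exact this.exp_left.eq
  have hderiv_eq :
      (((t + b) ^ 2)⁻¹ • (((t + b)⁻¹ • (E1 * F)) * Sm * E2 + (E1 * Sm) * -((t + b)⁻¹ • (E2 * F))) +
        (-(2 * (t + b)) / ((t + b) ^ 2) ^ 2) • (E1 * Sm * E2))
      = (t + b)⁻¹ • (-(S t * F - F * S t) - (2 : ℝ) • S t) := by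
    rw [hSdef t ht, ← hL, ← hE1def, ← hE2def]
    have h1 : ((t + b)⁻¹ • (E1 * F)) * Sm * E2 = (t + b)⁻¹ • (F * (E1 * Sm * E2)) := by
      rw [Matrix.smul_mul, Matrix.smul_mul, hcomm, Matrix.mul_assoc, Matrix.mul_assoc,
        Matrix.mul_assoc]
    have h2 : (E1 * Sm) * -((t + b)⁻¹ • (E2 * F)) = -((t + b)⁻¹ • ((E1 * Sm * E2) * F)) := by
      rw [Matrix.mul_neg, Matrix.mul_smul]; simp [Matrix.mul_assoc]
    rw [h1, h2, Matrix.smul_mul, Matrix.mul_smul]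
    match_scalars <;> field_simp <;> ring
  rw [← hderiv_eq]
  exact (entryCLM i j).hasFDerivAt.comp_hasDerivAt t hSder
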